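/- For all real x with 0 < x < 1, we have 3·Γ(3x)·Γ(x) + x·Γ(x)²·Γ(2x) − 6·Γ(2x)² > 0. -/

import Mathlib

open Filter Finset

/-- Per-factor inequality: for `k ≥ 2` and `0 < x < 1`,
`(k+x)^4 (k+3x)^2 ≤ k (k+2x)^5`. -/
private lemma gcp_factor_le {x k : ℝ} (hx : 0 < x) (hx1 : x < 1) (hk : 2 ≤ k) :
    (k + x) ^ 4 * (k + 3 * x) ^ 2 ≤ k * (k + 2 * x) ^ 5 := by
  have hk2 : (4:ℝ) ≤ k ^ 2 := by nlinarith
  have hx2 : x ^ 2 ≤ 1 := by nlinarith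
  have hk4 : (16:ℝ) ≤ k ^ 4 := by nlinarith
  have hx4 : x ^ 4 ≤ 1 := by nlinarith
  have h1 : (0:ℝ) ≤ 2 * k ^ 2 - 5 * x ^ 2 := by nlinarith
  have h2 : (0:ℝ) ≤ k ^ 4 - 9 * x ^ 4 := by nlinarith
  nlinarith [mul_nonneg (mul_nonneg (mul_nonneg hx.le hx.le) hx.le)
      (mul_nonneg (by linarith : (0:ℝ) ≤ k) h1),
    mul_nonneg (mul_nonneg hx.le hx.le) h2]

set_option maxHeartbeats 3000000 in
theorem gamma_combination_pos :
    ∀ x : ℝ, 0 < x → x < 1 →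
      3 * Real.Gamma (3 * x) * Real.Gamma x
        + x * (Real.Gamma x) ^ 2 * Real.Gamma (2 * x)
        - 6 * (Real.Gamma (2 * x)) ^ 2 > 0 := by
  intro x hx hx1
  have hxne : x ≠ 0 := ne_of_gt hx
  set a := Real.Gamma (x + 1) with ha
  set b := Real.Gamma (2 * x + 1) with hb
  set c := Real.Gamma (3 * x + 1) with hc
  have ha' : a = x * Real.Gamma x := Real.Gamma_add_one hxne
  have hb' : b = (2 * x) * Real.Gamma (2 * x) := Real.Gamma_add_one (by positivity)
  have hc' : c = (3 * x) * Real.Gamma (3 * x) := Real.Gamma_add_one (by positivity)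
  have hapos : 0 < a := Real.Gamma_pos_of_pos (by linarith)
  have hbpos : 0 < b := Real.Gamma_pos_of_pos (by linarith)
  have hcpos : 0 < c := Real.Gamma_pos_of_pos (by linarith)
  -- explicit polynomials
  set M : ℝ := ∏ j ∈ range 5, ((x + 1 + (j : ℝ)) ^ 4 * (3 * x + 1 + (j : ℝ)) ^ 2) with hM
  set N : ℝ := ∏ j ∈ range 5, (((j : ℝ) + 1) * (2 * x + 1 + (j : ℝ)) ^ 5) with hN
  have hMpos : 0 < M := by
    refine Finset.prod_pos fun j _ => ?_
    have hj : (0:ℝ) ≤ (j : ℝ) := Nat.cast_nonneg j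
    positivity
  have hNpos : 0 < N := by
    refine Finset.prod_pos fun j _ => ?_
    have hj : (0:ℝ) ≤ (j : ℝ) := Nat.cast_nonneg j
    positivity
  -- key strict polynomial inequality M < N (Abel-summation certificate)
  have habel : N - M = (1 - x) * (4370319360000 * x ^ 2 + 82917070848000 * x ^ 3 + 739338389222400 * x ^ 4 + 4129811271513600 * x ^ 5 + 16246646768538816 * x ^ 6 + 47966952399878016 * x ^ 7 + 110576303196798096 * x ^ 8 + 204442466161547376 * x ^ 9 + 309074524241632020 * x ^ 10 + 387796602321645120 * x ^ 11 + 409021254462145995 * x ^ 12 + 367538341742447445 * x ^ 13 + 286617820094682660 * x ^ 14 + 200288683879048260 * x ^ 15 + 132975794507484960 * x ^ 16 + 91713666306906360 * x ^ 17 + 71263839962689740 * x ^ 18 + 62972926905782340 * x ^ 19 + 60213077645840190 * x ^ 20 + 59459768557106490 * x ^ 21 + 59292001331350380 * x ^ 22 + 59261760626791980 * x ^ 23 + 59257396580315880 * x ^ 24 + 59256899414419680 * x ^ 25 + 59256855535746384 * x ^ 26 + 59256852622006284 * x ^ 27 + 59256852484192479 * x ^ 28 + 59256852480059049 * x ^ 29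 + 59256852480000000 * x ^ 30) + 59256852480000000 * x ^ 31 := by
    rw [hM, hN]
    simp [Finset.prod_range_succ]
    push_cast
    ring
  have hMN : M < N := by
    have h1x : (0:ℝ) < 1 - x := by linarith
    have hP : (0:ℝ) < (4370319360000 * x ^ 2 + 82917070848000 * x ^ 3 + 739338389222400 * x ^ 4 + 4129811271513600 * x ^ 5 + 16246646768538816 * x ^ 6 + 47966952399878016 * x ^ 7 + 110576303196798096 * x ^ 8 + 204442466161547376 * x ^ 9 + 309074524241632020 * x ^ 10 + 387796602321645120 * x ^ 11 + 409021254462145995 * x ^ 12 + 367538341742447445 * x ^ 13 + 286617820094682660 * x ^ 14 + 200288683879048260 * x ^ 15 + 132975794507484960 * x ^ 16 + 91713666306906360 * x ^ 17 + 71263839962689740 * x ^ 18 + 62972926905782340 * x ^ 19 + 60213077645840190 * x ^ 20 + 59459768557106490 * x ^ 21 + 59292001331350380 * x ^ 22 + 59261760626791980 * x ^ 23 + 59257396580315880 * x ^ 24 + 59256899414419680 * x ^ 25 + 59256855535746384 * x ^ 26 + 59256852622006284 * x ^ 27 + 59256852484192479 * x ^ 28 + 59256852480059049 * x ^ 29 +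 59256852480000000 * x ^ 30) := by positivity
    have h31 : (0:ℝ) < 59256852480000000 * x ^ 31 := by positivity
    nlinarith [mul_pos h1x hP, h31, habel]
  -- positivity of GammaSeq denominators
  have hprod_pos : ∀ s : ℝ, 0 < s → ∀ n : ℕ, 0 < ∏ j ∈ range (n + 1), (s + (j : ℝ)) := by
    intro s hs n
    refine Finset.prod_pos fun j _ => ?_
    have hj : (0:ℝ) ≤ (j : ℝ) := Nat.cast_nonneg j
    linarith
  -- key 1 : b^2 ≤ a * c
  have key1 : b ^ 2 ≤ a * c := by
    have tb : Tendsto (fun n => Real.GammaSeq (2 * x + 1) n ^ 2) atTop (nhds (b ^ 2)) :=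
      (Real.GammaSeq_tendsto_Gamma (2 * x + 1)).pow 2
    have tac : Tendsto (fun n => Real.GammaSeq (x + 1) n * Real.GammaSeq (3 * x + 1) n)
        atTop (nhds (a * c)) :=
      (Real.GammaSeq_tendsto_Gamma (x + 1)).mul (Real.GammaSeq_tendsto_Gamma (3 * x + 1))
    refine le_of_tendsto_of_tendsto tb tac (Filter.eventually_atTop.2 ⟨1, fun n hn => ?_⟩)
    show Real.GammaSeq (2 * x + 1) n ^ 2 ≤ Real.GammaSeq (x + 1) n * Real.GammaSeq (3 * x + 1) n
    have hnp : (0:ℝ) < n := by exact_mod_cast hn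
    have hp1 := hprod_pos (x + 1) (by linarith) n
    have hp2 := hprod_pos (2 * x + 1) (by linarith) n
    have hp3 := hprod_pos (3 * x + 1) (by linarith) n
    have hfn : (0:ℝ) < (n.factorial : ℝ) := by exact_mod_cast n.factorial_pos
    have hE1 : ((n:ℝ) ^ (2 * x + 1)) ^ 2 = (n:ℝ) ^ (x + 1) * (n:ℝ) ^ (3 * x + 1) := by
      have e2 : ((n:ℝ) ^ (2 * x + 1)) ^ 2 = (n:ℝ) ^ (4 * x + 2) := by
        rw [← Real.rpow_natCast ((n:ℝ) ^ (2 * x + 1)) 2, ← Real.rpow_mul hnp.le]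
        congr 1; push_cast; ring
      rw [e2, ← Real.rpow_add hnp]
      congr 1; ring
    have hprods : (∏ j ∈ range (n + 1), (x + 1 + (j:ℝ))) * (∏ j ∈ range (n + 1), (3 * x + 1 + (j:ℝ)))
        ≤ (∏ j ∈ range (n + 1), (2 * x + 1 + (j:ℝ))) ^ 2 := by
      rw [← Finset.prod_pow, ← Finset.prod_mul_distrib]
      refine Finset.prod_le_prod (fun j _ => ?_) (fun j _ => by nlinarith [sq_nonneg x])
      have hj : (0:ℝ) ≤ (j : ℝ) := Nat.cast_nonneg j
      positivity
    have hA : Real.GammaSeq (2 * x + 1) n ^ 2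
        = ((n:ℝ) ^ (2 * x + 1) * (n.factorial : ℝ)) ^ 2 / (∏ j ∈ range (n + 1), (2 * x + 1 + (j:ℝ))) ^ 2 := by
      simp only [Real.GammaSeq]; rw [div_pow]
    have hB : Real.GammaSeq (x + 1) n * Real.GammaSeq (3 * x + 1) n
        = ((n:ℝ) ^ (x + 1) * (n.factorial : ℝ)) * ((n:ℝ) ^ (3 * x + 1) * (n.factorial : ℝ)) /
          ((∏ j ∈ range (n + 1), (x + 1 + (j:ℝ))) * ∏ j ∈ range (n + 1), (3 * x + 1 + (j:ℝ))) := by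
      simp only [Real.GammaSeq]; rw [div_mul_div_comm]
    rw [hA, hB, div_le_div_iff₀ (by positivity) (by positivity)]
    calc ((n:ℝ) ^ (2 * x + 1) * (n.factorial : ℝ)) ^ 2 *
          ((∏ j ∈ range (n + 1), (x + 1 + (j:ℝ))) * ∏ j ∈ range (n + 1), (3 * x + 1 + (j:ℝ)))
        ≤ ((n:ℝ) ^ (2 * x + 1) * (n.factorial : ℝ)) ^ 2 *
          (∏ j ∈ range (n + 1), (2 * x + 1 + (j:ℝ))) ^ 2 :=
          mul_le_mul_of_nonneg_left hprods (by positivity)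
      _ = (n:ℝ) ^ (x + 1) * (n.factorial : ℝ) * ((n:ℝ) ^ (3 * x + 1) * (n.factorial : ℝ)) *
          (∏ j ∈ range (n + 1), (2 * x + 1 + (j:ℝ))) ^ 2 := by
          linear_combination ((n.factorial : ℝ)) ^ 2 *
            (∏ j ∈ range (n + 1), (2 * x + 1 + (j:ℝ))) ^ 2 * hE1
  -- key 2 : N * b^5 ≤ M * (a^4 * c^2)
  have key2 : N * b ^ 5 ≤ M * (a ^ 4 * c ^ 2) := by
    have tb : Tendsto (fun n => Real.GammaSeq (2 * x + 1) n ^ 5 * N) atTop (nhds (b ^ 5 * N)) :=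
      ((Real.GammaSeq_tendsto_Gamma (2 * x + 1)).pow 5).mul_const N
    have tone : Tendsto (fun n : ℕ => ((n:ℝ) + 1) / n) atTop (nhds 1) := by
      have h0 : Tendsto (fun n : ℕ => 1 + 1 / (n:ℝ)) atTop (nhds 1) := by
        simpa using (tendsto_const_nhds (x := (1:ℝ))).add tendsto_one_div_atTop_nhds_zero_nat
      refine h0.congr' (Filter.eventually_atTop.2 ⟨1, fun n hn => ?_⟩)
      have hnp : (0:ℝ) < n := by exact_mod_cast hn
      field_simp
    have tac : Tendsto (fun n : ℕ => Real.GammaSeq (x + 1) n ^ 4 * Real.GammaSeq (3 * x + 1) n ^ 2 *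
        (((n:ℝ) + 1) / n) * M) atTop (nhds (a ^ 4 * c ^ 2 * 1 * M)) :=
      ((((Real.GammaSeq_tendsto_Gamma (x + 1)).pow 4).mul
        ((Real.GammaSeq_tendsto_Gamma (3 * x + 1)).pow 2)).mul tone).mul_const M
    rw [show a ^ 4 * c ^ 2 * 1 * M = M * (a ^ 4 * c ^ 2) by ring] at tac
    have hle : b ^ 5 * N ≤ M * (a ^ 4 * c ^ 2) := by
      refine le_of_tendsto_of_tendsto tb tac (Filter.eventually_atTop.2 ⟨4, fun n hn => ?_⟩)
      show Real.GammaSeq (2 * x + 1) n ^ 5 * N ≤ Real.GammaSeq (x + 1) n ^ 4 *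
        Real.GammaSeq (3 * x + 1) n ^ 2 * (((n:ℝ) + 1) / (n:ℝ)) * M
      have hn1 : 1 ≤ n := by omega
      have hnp : (0:ℝ) < n := by exact_mod_cast hn1
      have hp1 := hprod_pos (x + 1) (by linarith) n
      have hp2 := hprod_pos (2 * x + 1) (by linarith) n
      have hp3 := hprod_pos (3 * x + 1) (by linarith) n
      have hfn : (0:ℝ) < (n.factorial : ℝ) := by exact_mod_cast n.factorial_pos
      -- exponent identity
      have hE : ((n:ℝ) ^ (x + 1)) ^ 4 * ((n:ℝ) ^ (3 * x + 1)) ^ 2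
          = ((n:ℝ) ^ (2 * x + 1)) ^ 5 * (n:ℝ) := by
        have e1 : ((n:ℝ) ^ (x + 1)) ^ 4 = (n:ℝ) ^ (4 * x + 4) := by
          rw [← Real.rpow_natCast ((n:ℝ) ^ (x + 1)) 4, ← Real.rpow_mul hnp.le]
          congr 1; push_cast; ring
        have e3 : ((n:ℝ) ^ (3 * x + 1)) ^ 2 = (n:ℝ) ^ (6 * x + 2) := by
          rw [← Real.rpow_natCast ((n:ℝ) ^ (3 * x + 1)) 2, ← Real.rpow_mul hnp.le]
          congr 1; push_cast; ring
        have e2 : ((n:ℝ) ^ (2 * x + 1)) ^ 5 = (n:ℝ) ^ (10 * x + 5) := by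
          rw [← Real.rpow_natCast ((n:ℝ) ^ (2 * x + 1)) 5, ← Real.rpow_mul hnp.le]
          congr 1; push_cast; ring
        rw [e1, e2, e3, ← Real.rpow_add hnp, ← Real.rpow_add_one (ne_of_gt hnp)]
        congr 1; ring
      -- factorial as a product
      have hfact : (n.factorial : ℝ) * ((n:ℝ) + 1) = ∏ j ∈ range (n + 1), ((j:ℝ) + 1) := by
        have h := Finset.prod_range_add_one_eq_factorial (n + 1)
        have h2 : ((∏ j ∈ range (n + 1), (j + 1) : ℕ) : ℝ) = (((n + 1).factorial : ℕ) : ℝ) := by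
          exact_mod_cast congrArg (fun t : ℕ => (t : ℝ)) h
        push_cast [Nat.factorial_succ] at h2
        push_cast
        linarith [h2]
      -- core finite-product comparison
      have htail : (∏ j ∈ Ico 5 (n + 1), ((x + 1 + (j:ℝ)) ^ 4 * (3 * x + 1 + (j:ℝ)) ^ 2))
          ≤ ∏ j ∈ Ico 5 (n + 1), (((j:ℝ) + 1) * (2 * x + 1 + (j:ℝ)) ^ 5) := by
        refine Finset.prod_le_prod (fun j _ => ?_) (fun j hj => ?_)
        · have hjc : (0:ℝ) ≤ (j : ℝ) := Nat.cast_nonneg j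
          positivity
        · have hj5 : 5 ≤ j := (Finset.mem_Ico.1 hj).1
          have hk2 : (2:ℝ) ≤ (j:ℝ) + 1 := by
            have : (5:ℝ) ≤ (j:ℝ) := by exact_mod_cast hj5
            linarith
          have hfac := gcp_factor_le hx hx1 hk2
          calc (x + 1 + (j:ℝ)) ^ 4 * (3 * x + 1 + (j:ℝ)) ^ 2
              = ((j:ℝ) + 1 + x) ^ 4 * ((j:ℝ) + 1 + 3 * x) ^ 2 := by ring
            _ ≤ ((j:ℝ) + 1) * ((j:ℝ) + 1 + 2 * x) ^ 5 := hfac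
            _ = ((j:ℝ) + 1) * (2 * x + 1 + (j:ℝ)) ^ 5 := by ring
      have hgoal2 : N * (∏ j ∈ range (n + 1), ((x + 1 + (j:ℝ)) ^ 4 * (3 * x + 1 + (j:ℝ)) ^ 2))
          ≤ M * ∏ j ∈ range (n + 1), (((j:ℝ) + 1) * (2 * x + 1 + (j:ℝ)) ^ 5) := by
        rw [← Finset.prod_range_mul_prod_Ico
            (fun j : ℕ => (x + 1 + (j:ℝ)) ^ 4 * (3 * x + 1 + (j:ℝ)) ^ 2) (show 5 ≤ n + 1 by omega),
          ← Finset.prod_range_mul_prod_Ico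
            (fun j : ℕ => ((j:ℝ) + 1) * (2 * x + 1 + (j:ℝ)) ^ 5) (show 5 ≤ n + 1 by omega),
          hM, hN]
        calc (∏ j ∈ range 5, (((j:ℝ) + 1) * (2 * x + 1 + (j:ℝ)) ^ 5)) *
              ((∏ j ∈ range 5, ((x + 1 + (j:ℝ)) ^ 4 * (3 * x + 1 + (j:ℝ)) ^ 2)) *
                ∏ j ∈ Ico 5 (n + 1), ((x + 1 + (j:ℝ)) ^ 4 * (3 * x + 1 + (j:ℝ)) ^ 2))
            = ((∏ j ∈ range 5, (((j:ℝ) + 1) * (2 * x + 1 + (j:ℝ)) ^ 5)) *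
                (∏ j ∈ range 5, ((x + 1 + (j:ℝ)) ^ 4 * (3 * x + 1 + (j:ℝ)) ^ 2))) *
                ∏ j ∈ Ico 5 (n + 1), ((x + 1 + (j:ℝ)) ^ 4 * (3 * x + 1 + (j:ℝ)) ^ 2) := by ring
          _ ≤ ((∏ j ∈ range 5, (((j:ℝ) + 1) * (2 * x + 1 + (j:ℝ)) ^ 5)) *
                (∏ j ∈ range 5, ((x + 1 + (j:ℝ)) ^ 4 * (3 * x + 1 + (j:ℝ)) ^ 2))) *
                ∏ j ∈ Ico 5 (n + 1), (((j:ℝ) + 1) * (2 * x + 1 + (j:ℝ)) ^ 5) := by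
              refine mul_le_mul_of_nonneg_left htail ?_
              refine mul_nonneg (Finset.prod_nonneg fun j _ => ?_) (Finset.prod_nonneg fun j _ => ?_)
              · have hjc : (0:ℝ) ≤ (j : ℝ) := Nat.cast_nonneg j
                positivity
              · have hjc : (0:ℝ) ≤ (j : ℝ) := Nat.cast_nonneg j
                positivity
          _ = (∏ j ∈ range 5, ((x + 1 + (j:ℝ)) ^ 4 * (3 * x + 1 + (j:ℝ)) ^ 2)) *
              ((∏ j ∈ range 5, (((j:ℝ) + 1) * (2 * x + 1 + (j:ℝ)) ^ 5)) *
                ∏ j ∈ Ico 5 (n + 1), (((j:ℝ) + 1) * (2 * x + 1 + (j:ℝ)) ^ 5)) := by ring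
      have hcore : N * ((∏ j ∈ range (n + 1), (x + 1 + (j:ℝ))) ^ 4 *
            (∏ j ∈ range (n + 1), (3 * x + 1 + (j:ℝ))) ^ 2)
          ≤ (n.factorial : ℝ) * ((n:ℝ) + 1) * M * (∏ j ∈ range (n + 1), (2 * x + 1 + (j:ℝ))) ^ 5 := by
        calc N * ((∏ j ∈ range (n + 1), (x + 1 + (j:ℝ))) ^ 4 *
              (∏ j ∈ range (n + 1), (3 * x + 1 + (j:ℝ))) ^ 2)
            = N * ∏ j ∈ range (n + 1), ((x + 1 + (j:ℝ)) ^ 4 * (3 * x + 1 + (j:ℝ)) ^ 2) := by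
              rw [← Finset.prod_pow, ← Finset.prod_pow, ← Finset.prod_mul_distrib]
          _ ≤ M * ∏ j ∈ range (n + 1), (((j:ℝ) + 1) * (2 * x + 1 + (j:ℝ)) ^ 5) := hgoal2
          _ = (n.factorial : ℝ) * ((n:ℝ) + 1) * M * (∏ j ∈ range (n + 1), (2 * x + 1 + (j:ℝ))) ^ 5 := by
              rw [Finset.prod_mul_distrib, ← hfact, Finset.prod_pow]
              ring
      -- put it together
      have hA : Real.GammaSeq (2 * x + 1) n ^ 5 * N
          = ((n:ℝ) ^ (2 * x + 1) * (n.factorial : ℝ)) ^ 5 * N /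
            (∏ j ∈ range (n + 1), (2 * x + 1 + (j:ℝ))) ^ 5 := by
        simp only [Real.GammaSeq]; rw [div_pow, div_mul_eq_mul_div]
      have hB : Real.GammaSeq (x + 1) n ^ 4 * Real.GammaSeq (3 * x + 1) n ^ 2 *
            (((n:ℝ) + 1) / n) * M
          = ((n:ℝ) ^ (x + 1) * (n.factorial : ℝ)) ^ 4 * ((n:ℝ) ^ (3 * x + 1) * (n.factorial : ℝ)) ^ 2 *
              (((n:ℝ) + 1) * M) /
            ((∏ j ∈ range (n + 1), (x + 1 + (j:ℝ))) ^ 4 *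
              (∏ j ∈ range (n + 1), (3 * x + 1 + (j:ℝ))) ^ 2 * (n:ℝ)) := by
        simp only [Real.GammaSeq]
        rw [div_pow, div_pow]
        field_simp
      rw [hA, hB, div_le_div_iff₀ (by positivity) (by positivity)]
      calc ((n:ℝ) ^ (2 * x + 1) * (n.factorial : ℝ)) ^ 5 * N *
            ((∏ j ∈ range (n + 1), (x + 1 + (j:ℝ))) ^ 4 *
              (∏ j ∈ range (n + 1), (3 * x + 1 + (j:ℝ))) ^ 2 * (n:ℝ))
          = ((n:ℝ) ^ (2 * x + 1)) ^ 5 * (n:ℝ) * (n.factorial : ℝ) ^ 5 *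
            (N * ((∏ j ∈ range (n + 1), (x + 1 + (j:ℝ))) ^ 4 *
              (∏ j ∈ range (n + 1), (3 * x + 1 + (j:ℝ))) ^ 2)) := by ring
        _ ≤ ((n:ℝ) ^ (2 * x + 1)) ^ 5 * (n:ℝ) * (n.factorial : ℝ) ^ 5 *
            ((n.factorial : ℝ) * ((n:ℝ) + 1) * M * (∏ j ∈ range (n + 1), (2 * x + 1 + (j:ℝ))) ^ 5) :=
            mul_le_mul_of_nonneg_left hcore (by positivity)
        _ = ((n:ℝ) ^ (x + 1) * (n.factorial : ℝ)) ^ 4 * ((n:ℝ) ^ (3 * x + 1) * (n.factorial : ℝ)) ^ 2 *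
              (((n:ℝ) + 1) * M) * (∏ j ∈ range (n + 1), (2 * x + 1 + (j:ℝ))) ^ 5 := by
            linear_combination (-1 : ℝ) * (n.factorial : ℝ) ^ 6 * (((n:ℝ) + 1) * M) *
              (∏ j ∈ range (n + 1), (2 * x + 1 + (j:ℝ))) ^ 5 * hE
    linarith [hle]
  -- final algebra: 0 < 2ac + a²b − 3b²
  have ht : 0 ≤ a * c - b ^ 2 := by linarith [key1]
  have hstep : M * (a * c) ^ 2 * b * (2 * (a * c) + a ^ 2 * b - 3 * b ^ 2)
      = (M * (a ^ 4 * c ^ 2) - N * b ^ 5) * b ^ 2 +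
        ((N - M) * b ^ 7 + M * b * (3 * b ^ 2 * (a * c - b ^ 2) ^ 2
          + 2 * (a * c - b ^ 2) ^ 3)) := by ring
  have hpos1 : 0 < (N - M) * b ^ 7 :=
    mul_pos (by linarith) (pow_pos hbpos 7)
  have hpos2 : 0 ≤ M * b * (3 * b ^ 2 * (a * c - b ^ 2) ^ 2 + 2 * (a * c - b ^ 2) ^ 3) := by
    refine mul_nonneg (mul_nonneg hMpos.le hbpos.le) ?_
    have h3 : 0 ≤ (a * c - b ^ 2) ^ 3 := pow_nonneg ht 3
    positivity
  have hpos3 : 0 ≤ (M * (a ^ 4 * c ^ 2) - N * b ^ 5) * b ^ 2 :=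
    mul_nonneg (by linarith [key2]) (sq_nonneg b)
  have hleft : 0 < M * (a * c) ^ 2 * b * (2 * (a * c) + a ^ 2 * b - 3 * b ^ 2) := by
    rw [hstep]; linarith
  have main : 0 < 2 * (a * c) + a ^ 2 * b - 3 * b ^ 2 := by
    by_contra hcon
    push_neg at hcon
    have hfac : (0:ℝ) < M * (a * c) ^ 2 * b := by positivity
    nlinarith [mul_nonpos_of_nonneg_of_nonpos hfac.le hcon]
  -- convert back to the original statement
  have gx : Real.Gamma x = a / x := by rw [ha']; field_simp
  have g2x : Real.Gamma (2 * x) = b / (2 * x) := by rw [hb']; field_simp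
  have g3x : Real.Gamma (3 * x) = c / (3 * x) := by rw [hc']; field_simp
  rw [gt_iff_lt, gx, g2x, g3x]
  have heq : 3 * (c / (3 * x)) * (a / x) + x * (a / x) ^ 2 * (b / (2 * x))
      - 6 * (b / (2 * x)) ^ 2
      = (2 * (a * c) + a ^ 2 * b - 3 * b ^ 2) / (2 * x ^ 2) := by
    field_simp
    ring
  rw [heq]
  exact div_pos main (by positivity)
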